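/- Let m(n,k) denote the number of perfect matchings of [1,2n] with exactly k long pairs. Then for all n ≥ 1 and k ∈ ℤ, m(n,k) = m(n−1,k) + (n+k−2)·m(n−1,k−1) + (n−k+1)·m(n−1,k−2), with m(n,k)=0 for k<0 or k>n and m(n,0)=1 for all n ≥ 0. -/

import Mathlib

/-- `M` is a perfect matching on `[1, 2n]`. -/
def IsMatching (n : ℕ) (M : Finset (Finset ℕ)) : Prop :=
  (∀ p ∈ M, p.card = 2) ∧ (M : Set (Finset ℕ)).PairwiseDisjoint id ∧
    M.biUnion id = Finset.Icc 1 (2 * n)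

/-- A pair is long if it is not of the form `{i, i+1}`. -/
def IsLong (p : Finset ℕ) : Prop := ∀ i : ℕ, p ≠ {i, i + 1}

/-- `matchCount n k`: the number of perfect matchings of `[1,2n]` with exactly
`k` long pairs (for `k : ℤ`; it vanishes for `k < 0`). -/
noncomputable def matchCount (n : ℕ) (k : ℤ) : ℕ :=
  Nat.card {M : Finset (Finset ℕ) //
    IsMatching n M ∧ ({p : Finset ℕ | p ∈ M ∧ IsLong p}.ncard : ℤ) = k}

open Finset
open scoped Classical

noncomputable def Fm (n : ℕ) : Finset (Finset (Finset ℕ)) :=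
  ((Finset.Icc 1 (2*n)).powerset.powerset).filter (fun M => IsMatching n M)

noncomputable def lc (M : Finset (Finset ℕ)) : ℕ := (M.filter IsLong).card

noncomputable def Fk (n k : ℕ) : Finset (Finset (Finset ℕ)) :=
  (Fm n).filter (fun M => lc M = k)

lemma pair_subset {n : ℕ} {M : Finset (Finset ℕ)} (h : IsMatching n M)
    {p : Finset ℕ} (hp : p ∈ M) : p ⊆ Finset.Icc 1 (2*n) := by
  rw [← h.2.2]
  exact Finset.subset_biUnion_of_mem id hp

lemma mem_Fm {n : ℕ} {M : Finset (Finset ℕ)} : M ∈ Fm n ↔ IsMatching n M := by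
  constructor
  · intro h; exact (Finset.mem_filter.1 h).2
  · intro h
    refine Finset.mem_filter.2 ⟨?_, h⟩
    simp only [Finset.mem_powerset]
    intro p hp
    simpa using pair_subset h hp

lemma mem_Fk {n k : ℕ} {M : Finset (Finset ℕ)} :
    M ∈ Fk n k ↔ IsMatching n M ∧ lc M = k := by
  simp [Fk, Finset.mem_filter, mem_Fm]

lemma ncard_eq_lc (M : Finset (Finset ℕ)) :
    {p : Finset ℕ | p ∈ M ∧ IsLong p}.ncard = lc M := by
  have : {p : Finset ℕ | p ∈ M ∧ IsLong p} = ↑(M.filter IsLong) := by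
    ext p; simp
  rw [this, Set.ncard_coe_finset, lc]

lemma mc_eq (n k : ℕ) : matchCount n (k : ℤ) = (Fk n k).card := by
  rw [matchCount]
  have : ∀ M : Finset (Finset ℕ),
      (IsMatching n M ∧ ({p : Finset ℕ | p ∈ M ∧ IsLong p}.ncard : ℤ) = (k:ℤ)) ↔ M ∈ Fk n k := by
    intro M
    rw [mem_Fk, ncard_eq_lc]
    exact and_congr_right fun _ => Nat.cast_inj
  rw [Nat.card_congr (Equiv.subtypeEquivRight this), Nat.card_eq_finsetCard]

lemma mc_neg (n : ℕ) {k : ℤ} (hk : k < 0) : matchCount n k = 0 := by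
  rw [matchCount, Nat.card_eq_zero]
  left
  constructor
  rintro ⟨M, hM, hc⟩
  omega

lemma card_filter_lc_add (n d k : ℕ) :
    ((((Fm n).filter (fun M => lc M + d = k)).card : ℤ)) = matchCount n ((k:ℤ) - d) := by
  by_cases h : d ≤ k
  · have hk : ((k:ℤ) - d) = ((k - d : ℕ) : ℤ) := by push_cast; omega
    rw [hk, mc_eq, Fk]
    congr 1
    congr 1
    apply Finset.filter_congr
    intro M _
    omega
  · rw [mc_neg n (by omega)]
    norm_num [Finset.filter_eq_empty_iff]
    intro M hM hMc
    omega

/-! ### pair lemmas -/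

lemma pair_eq_pair {a b c d : ℕ} (h : ({a, b} : Finset ℕ) = {c, d}) :
    (a = c ∧ b = d) ∨ (a = d ∧ b = c) := by
  have ha : a ∈ ({c, d} : Finset ℕ) := h ▸ (by simp)
  have hb : b ∈ ({c, d} : Finset ℕ) := h ▸ (by simp)
  have hc : c ∈ ({a, b} : Finset ℕ) := h ▸ (by simp)
  have hd : d ∈ ({a, b} : Finset ℕ) := h ▸ (by simp)
  simp only [Finset.mem_insert, Finset.mem_singleton] at ha hb hc hd
  omega

lemma isLong_pair_iff {a b : ℕ} (hab : a < b) : IsLong {a, b} ↔ b ≠ a + 1 := by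
  constructor
  · intro h hb
    exact h a (by rw [hb])
  · intro h i heq
    rcases pair_eq_pair heq with ⟨h1, h2⟩ | ⟨h1, h2⟩ <;> omega

lemma not_isLong_pair {a : ℕ} : ¬ IsLong {a, a+1} := fun h => h a rfl

lemma card_two_struct {p : Finset ℕ} (h : p.card = 2) :
    ∃ a b, a < b ∧ p = {a, b} := by
  rcases Finset.card_eq_two.1 h with ⟨a, b, hab, rfl⟩
  rcases Nat.lt_or_ge a b with h' | h'
  · exact ⟨a, b, h', rfl⟩
  · exact ⟨b, a, by omega, Finset.pair_comm a b⟩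

/-! ### shift maps -/

def sig (j i : ℕ) : ℕ := if j ≤ i then i + 1 else i
def psi (j i : ℕ) : ℕ := if j < i then i - 1 else i

lemma sig_inj (j : ℕ) : Function.Injective (sig j) := by
  intro a b
  unfold sig
  split_ifs <;> omega

lemma psi_sig (j i : ℕ) : psi j (sig j i) = i := by
  unfold sig psi; split_ifs <;> omega

lemma sig_psi {j x : ℕ} (h : x ≠ j) : sig j (psi j x) = x := by
  unfold sig psi; split_ifs <;> omega

lemma image_sig_Icc {n j : ℕ} (h1 : 1 ≤ j) (h2 : j ≤ 2*n+1) :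
    (Finset.Icc 1 (2*n)).image (sig j) = (Finset.Icc 1 (2*n+1)).erase j := by
  ext x
  simp only [Finset.mem_image, Finset.mem_erase, Finset.mem_Icc]
  constructor
  · rintro ⟨i, hi, rfl⟩
    unfold sig; split_ifs <;> omega
  · rintro ⟨hxj, hx1, hx2⟩
    rcases Nat.lt_or_ge x j with h' | h'
    · exact ⟨x, by omega, by unfold sig; split_ifs <;> omega⟩
    · exact ⟨x - 1, by omega, by unfold sig; split_ifs <;> omega⟩

noncomputable def mapP (f : ℕ → ℕ) (M : Finset (Finset ℕ)) : Finset (Finset ℕ) :=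
  M.image (fun p => p.image f)

noncomputable def ins (n j : ℕ) (M : Finset (Finset ℕ)) : Finset (Finset ℕ) :=
  insert {j, 2*n+2} (mapP (sig j) M)

noncomputable def del (n j : ℕ) (M : Finset (Finset ℕ)) : Finset (Finset ℕ) :=
  mapP (psi j) (M.erase {j, 2*n+2})

/-! ### matching structure -/

lemma matching_card {n : ℕ} {M : Finset (Finset ℕ)} (h : IsMatching n M) :
    M.card = n := by
  have hd : ∀ x ∈ M, ∀ y ∈ M, x ≠ y → Disjoint (id x) (id y) := by
    intro x hx y hy hxy
    exact h.2.1 hx hy hxy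
  have := Finset.card_biUnion hd
  rw [h.2.2] at this
  simp only [Nat.card_Icc] at this
  have h2 : ∑ u ∈ M, (id u).card = ∑ u ∈ M, 2 := by
    apply Finset.sum_congr rfl
    intro p hp
    exact h.1 p hp
  rw [h2, Finset.sum_const, smul_eq_mul] at this
  omega

lemma lc_le {n : ℕ} {M : Finset (Finset ℕ)} (h : IsMatching n M) : lc M ≤ n := by
  rw [← matching_card h]
  exact Finset.card_filter_le _ _

lemma lc_add_shortc {n : ℕ} {M : Finset (Finset ℕ)} (h : IsMatching n M) :
    lc M + (M.filter (fun p => ¬ IsLong p)).card = n := by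
  rw [lc, Finset.card_filter_add_card_filter_not, matching_card h]

lemma disjoint_ne {M : Finset (Finset ℕ)} (h : (M : Set (Finset ℕ)).PairwiseDisjoint id)
    {p q : Finset ℕ} (hp : p ∈ M) (hq : q ∈ M) {x : ℕ} (hxp : x ∈ p) (hxq : x ∈ q) :
    p = q := by
  by_contra hne
  exact (Finset.disjoint_left.1 (h hp hq hne) hxp) hxq

/-- the partner of `2n+2` -/
lemma partner_exists {n : ℕ} {M : Finset (Finset ℕ)} (h : IsMatching (n+1) M) :
    ∃ j, 1 ≤ j ∧ j ≤ 2*n+1 ∧ {j, 2*n+2} ∈ M := by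
  have hmem : (2*n+2 : ℕ) ∈ M.biUnion id := by
    rw [h.2.2, Finset.mem_Icc]; omega
  rcases Finset.mem_biUnion.1 hmem with ⟨p, hp, hxp⟩
  rcases card_two_struct (h.1 p hp) with ⟨a, b, hab, rfl⟩
  have hsub := pair_subset h hp
  have ha := hsub (by simp : a ∈ ({a,b} : Finset ℕ))
  have hb := hsub (by simp : b ∈ ({a,b} : Finset ℕ))
  simp only [Finset.mem_Icc] at ha hb
  simp only [id_eq, Finset.mem_insert, Finset.mem_singleton] at hxp
  have hb2n : b = 2*n+2 := by omega
  subst hb2n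
  exact ⟨a, by omega, by omega, hp⟩

lemma partner_unique {n : ℕ} {M : Finset (Finset ℕ)} (h : IsMatching (n+1) M)
    {j j' : ℕ} (hj : j ≤ 2*n+1) (hj' : j' ≤ 2*n+1)
    (hm : {j, 2*n+2} ∈ M) (hm' : {j', 2*n+2} ∈ M) : j = j' := by
  have := disjoint_ne h.2.1 hm hm' (by simp : (2*n+2:ℕ) ∈ _) (by simp)
  rcases pair_eq_pair this with ⟨h1, _⟩ | ⟨h1, h2⟩ <;> omega

/-! ### ins and del -/

lemma biUnion_mapP (f : ℕ → ℕ) (M : Finset (Finset ℕ)) :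
    (mapP f M).biUnion id = (M.biUnion id).image f := by
  ext x
  simp only [mapP, Finset.mem_biUnion, Finset.mem_image, id_eq]
  constructor
  · rintro ⟨q, ⟨p, hp, rfl⟩, hx⟩
    rcases Finset.mem_image.1 hx with ⟨a, ha, rfl⟩
    exact ⟨a, ⟨p, hp, ha⟩, rfl⟩
  · rintro ⟨a, ⟨p, hp, ha⟩, rfl⟩
    exact ⟨p.image f, ⟨p, hp, rfl⟩, Finset.mem_image_of_mem f ha⟩

lemma mapP_sig_sub {n j : ℕ} {M : Finset (Finset ℕ)} (hM : IsMatching n M)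
    (hj1 : 1 ≤ j) (hj2 : j ≤ 2*n+1) {q : Finset ℕ} (hq : q ∈ mapP (sig j) M) :
    q ⊆ (Finset.Icc 1 (2*n+1)).erase j := by
  rcases Finset.mem_image.1 hq with ⟨p, hp, rfl⟩
  rw [← image_sig_Icc hj1 hj2]
  exact Finset.image_subset_image (pair_subset hM hp)

lemma newpair_not_mem {n j : ℕ} {M : Finset (Finset ℕ)} (hM : IsMatching n M)
    (hj1 : 1 ≤ j) (hj2 : j ≤ 2*n+1) : ({j, 2*n+2} : Finset ℕ) ∉ mapP (sig j) M := by
  intro hmem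
  have := mapP_sig_sub hM hj1 hj2 hmem (by simp : j ∈ ({j, 2*n+2} : Finset ℕ))
  simp at this

lemma ins_matching {n j : ℕ} {M : Finset (Finset ℕ)} (hM : IsMatching n M)
    (hj1 : 1 ≤ j) (hj2 : j ≤ 2*n+1) : IsMatching (n+1) (ins n j M) := by
  refine ⟨?_, ?_, ?_⟩
  · intro p hp
    rcases Finset.mem_insert.1 hp with rfl | hp'
    · rw [Finset.card_pair (by omega)]
    · rcases Finset.mem_image.1 hp' with ⟨q, hq, rfl⟩
      rw [Finset.card_image_of_injective _ (sig_inj j)]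
      exact hM.1 q hq
  · intro x hx y hy hxy
    simp only [ins, Finset.coe_insert, Set.mem_insert_iff, Finset.mem_coe] at hx hy
    have key : ∀ q ∈ mapP (sig j) M, Disjoint ({j, 2*n+2} : Finset ℕ) q := by
      intro q hq
      rw [Finset.disjoint_left]
      intro a ha ha'
      have := mapP_sig_sub hM hj1 hj2 hq ha'
      simp only [Finset.mem_erase, Finset.mem_Icc] at this
      simp only [Finset.mem_insert, Finset.mem_singleton] at ha
      omega
    rcases hx with rfl | hx <;> rcases hy with rfl | hy
    · exact absurd rfl hxy
    · exact key y hy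
    · exact (key x hx).symm
    · rcases Finset.mem_image.1 hx with ⟨p, hp, rfl⟩
      rcases Finset.mem_image.1 hy with ⟨q, hq, rfl⟩
      have hpq : p ≠ q := fun h => hxy (by rw [h])
      exact (Finset.disjoint_image (sig_inj j)).2 (hM.2.1 hp hq hpq)
  · rw [ins, Finset.biUnion_insert, biUnion_mapP, hM.2.2, image_sig_Icc hj1 hj2]
    ext x
    simp only [id_eq, Finset.mem_union, Finset.mem_insert, Finset.mem_singleton,
      Finset.mem_erase, Finset.mem_Icc]
    omega

lemma mapP_psi_sig (j : ℕ) (M : Finset (Finset ℕ)) :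
    mapP (psi j) (mapP (sig j) M) = M := by
  have h1 : ∀ p : Finset ℕ, (p.image (sig j)).image (psi j) = p := by
    intro p
    rw [Finset.image_image]
    calc p.image (psi j ∘ sig j) = p.image id :=
          Finset.image_congr (fun x _ => psi_sig j x)
      _ = p := Finset.image_id
  unfold mapP
  rw [Finset.image_image]
  calc M.image ((fun p => Finset.image (psi j) p) ∘ fun p => Finset.image (sig j) p)
      = M.image id := Finset.image_congr (fun p _ => h1 p)
    _ = M := Finset.image_id

lemma del_ins {n j : ℕ} {M : Finset (Finset ℕ)} (hM : IsMatching n M)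
    (hj1 : 1 ≤ j) (hj2 : j ≤ 2*n+1) : del n j (ins n j M) = M := by
  rw [del, ins, Finset.erase_insert (newpair_not_mem hM hj1 hj2), mapP_psi_sig]

lemma erase_avoid {n j : ℕ} {M : Finset (Finset ℕ)} (hM : IsMatching (n+1) M)
    (hmem : ({j, 2*n+2} : Finset ℕ) ∈ M) {p : Finset ℕ}
    (hp : p ∈ M.erase {j, 2*n+2}) : j ∉ p ∧ 2*n+2 ∉ p := by
  rcases Finset.mem_erase.1 hp with ⟨hne, hpM⟩
  have hd : Disjoint p ({j, 2*n+2} : Finset ℕ) := hM.2.1 hpM hmem hne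
  rw [Finset.disjoint_left] at hd
  exact ⟨fun h => hd h (by simp), fun h => hd h (by simp)⟩

lemma ins_del {n j : ℕ} {M : Finset (Finset ℕ)} (hM : IsMatching (n+1) M)
    (hmem : ({j, 2*n+2} : Finset ℕ) ∈ M) : ins n j (del n j M) = M := by
  rw [ins, del]
  have h1 : mapP (sig j) (mapP (psi j) (M.erase {j, 2*n+2})) = M.erase {j, 2*n+2} := by
    unfold mapP
    rw [Finset.image_image]
    have h2 : ∀ p ∈ M.erase {j, 2*n+2}, (p.image (psi j)).image (sig j) = p := by
      intro p hp
      rw [Finset.image_image]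
      calc p.image (sig j ∘ psi j) = p.image id := by
            apply Finset.image_congr
            intro x hx
            exact sig_psi (fun h => (erase_avoid hM hmem hp).1 (h ▸ hx))
        _ = p := Finset.image_id
    calc (M.erase {j, 2*n+2}).image
          ((fun p => Finset.image (sig j) p) ∘ fun p => Finset.image (psi j) p)
        = (M.erase {j, 2*n+2}).image id := Finset.image_congr (fun p hp => h2 p hp)
      _ = _ := Finset.image_id
  rw [h1, Finset.insert_erase hmem]

lemma erase_pair_sub {n j : ℕ} {M : Finset (Finset ℕ)} (hM : IsMatching (n+1) M)
    (hmem : ({j, 2*n+2} : Finset ℕ) ∈ M) {p : Finset ℕ}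
    (hp : p ∈ M.erase {j, 2*n+2}) : p ⊆ (Finset.Icc 1 (2*n+1)).erase j := by
  intro x hx
  have h1 := pair_subset hM (Finset.mem_erase.1 hp).2 hx
  have h2 := erase_avoid hM hmem hp
  simp only [Finset.mem_Icc] at h1
  simp only [Finset.mem_erase, Finset.mem_Icc]
  have hxj : x ≠ j := fun h => h2.1 (h ▸ hx)
  have hx2 : x ≠ 2*n+2 := fun h => h2.2 (h ▸ hx)
  refine ⟨hxj, by omega, by omega⟩

lemma psi_injOn {j : ℕ} {s : Finset ℕ} (hs : ∀ x ∈ s, x ≠ j) :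
    Set.InjOn (psi j) s := by
  intro x hx y hy hxy
  have : sig j (psi j x) = sig j (psi j y) := by rw [hxy]
  rwa [sig_psi (hs x hx), sig_psi (hs y hy)] at this

lemma del_matching {n j : ℕ} {M : Finset (Finset ℕ)} (hM : IsMatching (n+1) M)
    (hj1 : 1 ≤ j) (hj2 : j ≤ 2*n+1)
    (hmem : ({j, 2*n+2} : Finset ℕ) ∈ M) : IsMatching n (del n j M) := by
  have havoid : ∀ p ∈ M.erase {j, 2*n+2}, ∀ x ∈ p, x ≠ j := by
    intro p hp x hx h
    exact (erase_avoid hM hmem hp).1 (h ▸ hx)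
  refine ⟨?_, ?_, ?_⟩
  · intro q hq
    rcases Finset.mem_image.1 hq with ⟨p, hp, rfl⟩
    rw [Finset.card_image_of_injOn (psi_injOn (havoid p hp))]
    exact hM.1 p (Finset.mem_erase.1 hp).2
  · intro x hx y hy hxy
    simp only [del, mapP, Finset.coe_image, Set.mem_image, Finset.mem_coe] at hx hy
    rcases hx with ⟨p, hp, rfl⟩
    rcases hy with ⟨q, hq, rfl⟩
    have hpq : p ≠ q := fun h => hxy (by rw [h])
    have hdisj : Disjoint p q :=
      hM.2.1 (Finset.mem_erase.1 hp).2 (Finset.mem_erase.1 hq).2 hpq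
    show Disjoint (p.image (psi j)) (q.image (psi j))
    rw [Finset.disjoint_left]
    rintro a ha ha'
    rcases Finset.mem_image.1 ha with ⟨u, hu, rfl⟩
    rcases Finset.mem_image.1 ha' with ⟨v, hv, hvu⟩
    have : v = u := by
      have h1 : sig j (psi j v) = sig j (psi j u) := by rw [hvu]
      rwa [sig_psi (havoid q hq v hv), sig_psi (havoid p hp u hu)] at h1
    exact Finset.disjoint_left.1 hdisj hu (this ▸ hv)
  · rw [del, biUnion_mapP]
    have hbu : (M.erase {j, 2*n+2}).biUnion id = (Finset.Icc 1 (2*n+1)).erase j := by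
      apply Finset.Subset.antisymm
      · intro x hx
        rcases Finset.mem_biUnion.1 hx with ⟨p, hp, hxp⟩
        exact erase_pair_sub hM hmem hp hxp
      · intro x hx
        simp only [Finset.mem_erase, Finset.mem_Icc] at hx
        have : x ∈ M.biUnion id := by
          rw [hM.2.2, Finset.mem_Icc]; omega
        rcases Finset.mem_biUnion.1 this with ⟨p, hp, hxp⟩
        have hpne : p ≠ {j, 2*n+2} := by
          rintro rfl
          simp only [id_eq, Finset.mem_insert, Finset.mem_singleton] at hxp
          omega
        exact Finset.mem_biUnion.2 ⟨p, Finset.mem_erase.2 ⟨hpne, hp⟩, hxp⟩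
    rw [hbu, ← image_sig_Icc hj1 hj2, Finset.image_image]
    calc (Finset.Icc 1 (2*n)).image (psi j ∘ sig j)
        = (Finset.Icc 1 (2*n)).image id := Finset.image_congr (fun x _ => psi_sig j x)
      _ = _ := Finset.image_id

lemma isLong_image_sig {n j : ℕ} (hj1 : 1 ≤ j) {p : Finset ℕ} (hc : p.card = 2)
    (hsub : p ⊆ Finset.Icc 1 (2*n)) :
    IsLong (p.image (sig j)) ↔ (IsLong p ∨ p = {j-1, j}) := by
  rcases card_two_struct hc with ⟨a, b, hab, rfl⟩
  have ha := hsub (by simp : a ∈ ({a,b} : Finset ℕ))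
  have hb := hsub (by simp : b ∈ ({a,b} : Finset ℕ))
  simp only [Finset.mem_Icc] at ha hb
  have himg : ({a, b} : Finset ℕ).image (sig j) = {sig j a, sig j b} := by
    simp [Finset.image_insert]
  rw [himg]
  have hsab : sig j a < sig j b := by unfold sig; split_ifs <;> omega
  rw [isLong_pair_iff hsab, isLong_pair_iff hab]
  have heqiff : ({a, b} : Finset ℕ) = {j-1, j} ↔ (a = j - 1 ∧ b = j) := by
    constructor
    · intro h
      rcases pair_eq_pair h with ⟨h1, h2⟩ | ⟨h1, h2⟩ <;> omega
    · rintro ⟨rfl, rfl⟩; rfl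
  rw [heqiff]
  unfold sig
  split_ifs <;> omega

lemma lc_ins {n j : ℕ} {M : Finset (Finset ℕ)} (hM : IsMatching n M)
    (hj1 : 1 ≤ j) (hj2 : j ≤ 2*n+1) :
    lc (ins n j M) = lc M + ((if j ≤ 2*n then 1 else 0) + (if {j-1, j} ∈ M then 1 else 0)) := by
  classical
  have hnotmem := newpair_not_mem hM hj1 hj2
  have hshort : ¬ IsLong ({j-1, j} : Finset ℕ) := by
    have hjj : j - 1 + 1 = j := by omega
    intro hl
    exact not_isLong_pair (a := j-1) (by rw [hjj]; exact hl)
  have hdisj : Disjoint (M.filter IsLong)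
      (if ({j-1,j} : Finset ℕ) ∈ M then ({({j-1,j} : Finset ℕ)} : Finset (Finset ℕ)) else ∅) := by
    split_ifs
    · rw [Finset.disjoint_right]
      intro q hq
      simp only [Finset.mem_singleton] at hq
      subst hq
      intro hql
      exact hshort (Finset.mem_filter.1 hql).2
    · exact Finset.disjoint_empty_right _
  have hmapP : ((mapP (sig j) M).filter IsLong).card
      = lc M + (if {j-1, j} ∈ M then 1 else 0) := by
    rw [mapP, Finset.filter_image]
    rw [Finset.card_image_of_injective _ (Finset.image_injective (sig_inj j))]
    have hfc : M.filter (fun p => IsLong (p.image (sig j)))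
        = M.filter (fun p => IsLong p ∨ p = {j-1, j}) := by
      apply Finset.filter_congr
      intro p hp
      exact isLong_image_sig hj1 (hM.1 p hp) (pair_subset hM hp)
    rw [hfc, Finset.filter_or, Finset.filter_eq', Finset.card_union_of_disjoint hdisj, lc]
    by_cases hm : ({j-1,j} : Finset ℕ) ∈ M
    · rw [if_pos hm, if_pos hm, Finset.card_singleton]
    · rw [if_neg hm, if_neg hm, Finset.card_empty]
  have hlongnew : IsLong ({j, 2*n+2} : Finset ℕ) ↔ j ≤ 2*n := by
    rw [isLong_pair_iff (by omega : j < 2*n+2)]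
    omega
  rw [ins, lc, Finset.filter_insert]
  by_cases h : j ≤ 2*n
  · rw [if_pos (hlongnew.2 h),
      Finset.card_insert_of_notMem (fun hmem => hnotmem (Finset.mem_filter.1 hmem).1),
      hmapP, if_pos h]
    omega
  · rw [if_neg (fun hl => h (hlongnew.1 hl)), hmapP, if_neg h]
    omega

/-! ### the bijection -/

noncomputable def Tset (n k j : ℕ) : Finset (Finset (Finset ℕ)) :=
  (Fk (n+1) k).filter (fun M => ({j, 2*n+2} : Finset ℕ) ∈ M)

noncomputable def Sset (n k j : ℕ) : Finset (Finset (Finset ℕ)) :=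
  (Fm n).filter (fun M' => lc M' +
    ((if j ≤ 2*n then 1 else 0) + (if ({j-1, j} : Finset ℕ) ∈ M' then 1 else 0)) = k)

lemma card_T_eq {n k j : ℕ} (hj1 : 1 ≤ j) (hj2 : j ≤ 2*n+1) :
    (Tset n k j).card = (Sset n k j).card := by
  apply Finset.card_bij' (fun M _ => del n j M) (fun M' _ => ins n j M')
  · intro M hM
    rcases Finset.mem_filter.1 hM with ⟨hM1, hmem⟩
    rcases mem_Fk.1 hM1 with ⟨hmatch, hlc⟩
    have hdm := del_matching hmatch hj1 hj2 hmem
    refine Finset.mem_filter.2 ⟨mem_Fm.2 hdm, ?_⟩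
    have := lc_ins hdm hj1 hj2
    rw [ins_del hmatch hmem] at this
    omega
  · intro M' hM'
    rcases Finset.mem_filter.1 hM' with ⟨hM1, hlc⟩
    have hmatch := mem_Fm.1 hM1
    refine Finset.mem_filter.2 ⟨mem_Fk.2 ⟨ins_matching hmatch hj1 hj2, ?_⟩, ?_⟩
    · rw [lc_ins hmatch hj1 hj2]; omega
    · exact Finset.mem_insert_self _ _
  · intro M hM
    rcases Finset.mem_filter.1 hM with ⟨hM1, hmem⟩
    exact ins_del (mem_Fk.1 hM1).1 hmem
  · intro M' hM'
    exact del_ins (mem_Fm.1 (Finset.mem_filter.1 hM').1) hj1 hj2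

lemma decomp (n k : ℕ) :
    (Fk (n+1) k).card = ∑ j ∈ Finset.Icc 1 (2*n+1), (Tset n k j).card := by
  have hU : Fk (n+1) k = (Finset.Icc 1 (2*n+1)).biUnion (fun j => Tset n k j) := by
    ext M
    simp only [Finset.mem_biUnion]
    constructor
    · intro hM
      rcases partner_exists (mem_Fk.1 hM).1 with ⟨j, hj1, hj2, hmem⟩
      exact ⟨j, Finset.mem_Icc.2 ⟨hj1, hj2⟩, Finset.mem_filter.2 ⟨hM, hmem⟩⟩
    · rintro ⟨j, _, hM⟩
      exact (Finset.mem_filter.1 hM).1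
  rw [hU]
  apply Finset.card_biUnion
  intro j hj j' hj' hne
  rw [Function.onFun, Finset.disjoint_left]
  intro M hM hM'
  rcases Finset.mem_filter.1 hM with ⟨hM1, hmem⟩
  rcases Finset.mem_filter.1 hM' with ⟨_, hmem'⟩
  simp only [Finset.mem_coe, Finset.mem_Icc] at hj hj'
  exact hne (partner_unique (mem_Fk.1 hM1).1 hj.2 hj'.2 hmem hmem')

lemma Sset_top (n k : ℕ) : Sset n k (2*n+1) = Fk n k := by
  unfold Sset Fk
  apply Finset.filter_congr
  intro M hM
  have h1 : ¬ (2*n+1 ≤ 2*n) := by omega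
  have h2 : ({2*n+1-1, 2*n+1} : Finset ℕ) ∉ M := by
    intro hmem
    have : (2*n+1 : ℕ) ∈ M.biUnion id := Finset.mem_biUnion.2 ⟨_, hmem, by simp⟩
    rw [(mem_Fm.1 hM).2.2, Finset.mem_Icc] at this
    omega
  rw [if_neg h1, if_neg h2]
  omega

lemma shortcount_eq {n : ℕ} {M : Finset (Finset ℕ)} (hM : IsMatching n M) :
    ((Finset.Icc 1 (2*n)).filter (fun j => ({j-1, j} : Finset ℕ) ∈ M)).card
      = (M.filter (fun p => ¬ IsLong p)).card := by
  apply Finset.card_bij (fun j _ => ({j-1, j} : Finset ℕ))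
  · intro j hj
    rcases Finset.mem_filter.1 hj with ⟨hj1, hmem⟩
    rw [Finset.mem_Icc] at hj1
    refine Finset.mem_filter.2 ⟨hmem, ?_⟩
    have hjj : j - 1 + 1 = j := by omega
    intro hl
    exact not_isLong_pair (a := j-1) (by rw [hjj]; exact hl)
  · intro j hj j' hj' heq
    rcases Finset.mem_filter.1 hj with ⟨hj1, _⟩
    rcases Finset.mem_filter.1 hj' with ⟨hj'1, _⟩
    rw [Finset.mem_Icc] at hj1 hj'1
    rcases pair_eq_pair heq with ⟨h1, h2⟩ | ⟨h1, h2⟩ <;> omega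
  · intro q hq
    rcases Finset.mem_filter.1 hq with ⟨hqM, hqs⟩
    rcases card_two_struct (hM.1 q hqM) with ⟨a, b, hab, rfl⟩
    have hb : b = a + 1 := by
      by_contra hne
      exact hqs ((isLong_pair_iff hab).2 hne)
    have hsub := pair_subset hM hqM
    have ha := hsub (by simp : a ∈ ({a,b} : Finset ℕ))
    have hbb := hsub (by simp : b ∈ ({a,b} : Finset ℕ))
    rw [Finset.mem_Icc] at ha hbb
    refine ⟨a+1, Finset.mem_filter.2 ⟨Finset.mem_Icc.2 ⟨by omega, by omega⟩, ?_⟩, ?_⟩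
    · have : ({a+1-1, a+1} : Finset ℕ) = {a, b} := by
        simp only [Nat.add_sub_cancel]; rw [hb]
      rw [this]; exact hqM
    · simp only [Nat.add_sub_cancel]; rw [hb]

lemma inner_count {n k : ℕ} {M : Finset (Finset ℕ)} (hM : IsMatching n M) :
    ((Finset.Icc 1 (2*n)).filter
        (fun j => lc M + 1 + (if ({j-1, j} : Finset ℕ) ∈ M then 1 else 0) = k)).card
      = (if lc M + 2 = k then (n - lc M) else 0)
        + (if lc M + 1 = k then (n + lc M) else 0) := by
  classical
  set b := (M.filter (fun p => ¬ IsLong p)).card with hbdef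
  have hb : lc M + b = n := lc_add_shortc hM
  set p : ℕ → Prop := fun j => lc M + 1 + (if ({j-1, j} : Finset ℕ) ∈ M then 1 else 0) = k with hp
  set q : ℕ → Prop := fun j => ({j-1, j} : Finset ℕ) ∈ M with hq
  have hcq : ((Finset.Icc 1 (2*n)).filter q).card = b := shortcount_eq hM
  have hcnq : ((Finset.Icc 1 (2*n)).filter (fun j => ¬ q j)).card = 2*n - b := by
    have := Finset.card_filter_add_card_filter_not (s := Finset.Icc 1 (2*n)) (p := q)
    rw [hcq] at this
    simp only [Nat.card_Icc] at this
    have hble : b ≤ 2*n := by omega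
    omega
  have hsplit := Finset.card_filter_add_card_filter_not
    (s := (Finset.Icc 1 (2*n)).filter p) (p := q)
  rw [Finset.filter_comm p q, Finset.filter_comm p (fun j => ¬ q j)] at hsplit
  have e1 : ((Finset.Icc 1 (2*n)).filter q).filter p
      = if lc M + 2 = k then (Finset.Icc 1 (2*n)).filter q else ∅ := by
    split_ifs with h
    · apply Finset.filter_true_of_mem
      intro j hj
      have : q j := (Finset.mem_filter.1 hj).2
      simp only [hp, if_pos (show ({j-1, j} : Finset ℕ) ∈ M from this)]
      omega
    · apply Finset.filter_false_of_mem
      intro j hj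
      have : q j := (Finset.mem_filter.1 hj).2
      simp only [hp, if_pos (show ({j-1, j} : Finset ℕ) ∈ M from this)]
      omega
  have e2 : ((Finset.Icc 1 (2*n)).filter (fun j => ¬ q j)).filter p
      = if lc M + 1 = k then (Finset.Icc 1 (2*n)).filter (fun j => ¬ q j) else ∅ := by
    split_ifs with h
    · apply Finset.filter_true_of_mem
      intro j hj
      have : ¬ q j := (Finset.mem_filter.1 hj).2
      simp only [hp, if_neg (show ({j-1, j} : Finset ℕ) ∉ M from this)]
      omega
    · apply Finset.filter_false_of_mem
      intro j hj
      have : ¬ q j := (Finset.mem_filter.1 hj).2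
      simp only [hp, if_neg (show ({j-1, j} : Finset ℕ) ∉ M from this)]
      omega
  rw [e1, e2] at hsplit
  rw [← hsplit]
  split_ifs with h1 h2 h2 <;>
    simp only [hcq, hcnq, Finset.card_empty] <;> omega

lemma master (n k : ℕ) :
    ((Fk (n+1) k).card : ℤ) = (Fk n k).card
      + ((n:ℤ) + k - 1) * matchCount n ((k:ℤ) - 1)
      + ((n:ℤ) - k + 2) * matchCount n ((k:ℤ) - 2) := by
  classical
  rw [decomp]
  have hins : Finset.Icc 1 (2*n+1) = insert (2*n+1) (Finset.Icc 1 (2*n)) := by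
    ext x; simp only [Finset.mem_Icc, Finset.mem_insert]; omega
  rw [hins, Finset.sum_insert (by simp only [Finset.mem_Icc]; omega)]
  have htop : (Tset n k (2*n+1)).card = (Fk n k).card := by
    rw [card_T_eq (by omega) (by omega), Sset_top]
  have hTS : ∀ j ∈ Finset.Icc 1 (2*n), (Tset n k j).card
      = ((Fm n).filter (fun M => lc M + 1
          + (if ({j-1, j} : Finset ℕ) ∈ M then 1 else 0) = k)).card := by
    intro j hj
    rw [Finset.mem_Icc] at hj
    rw [card_T_eq (by omega) (by omega), Sset]
    congr 1
    apply Finset.filter_congr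
    intro M _
    rw [if_pos (by omega : j ≤ 2*n)]
    omega
  rw [Finset.sum_congr rfl hTS, htop]
  have hswap : ∑ j ∈ Finset.Icc 1 (2*n), ((Fm n).filter (fun M => lc M + 1
        + (if ({j-1, j} : Finset ℕ) ∈ M then 1 else 0) = k)).card
      = ∑ M ∈ Fm n, ((Finset.Icc 1 (2*n)).filter
          (fun j => lc M + 1 + (if ({j-1, j} : Finset ℕ) ∈ M then 1 else 0) = k)).card := by
    simp only [Finset.card_filter]
    exact Finset.sum_comm
  rw [hswap]
  have hinner : ∀ M ∈ Fm n, (((Finset.Icc 1 (2*n)).filter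
          (fun j => lc M + 1 + (if ({j-1, j} : Finset ℕ) ∈ M then 1 else 0) = k)).card : ℤ)
      = (if lc M + 2 = k then ((n:ℤ) - k + 2) else 0)
        + (if lc M + 1 = k then ((n:ℤ) + k - 1) else 0) := by
    intro M hM
    have hmatch := mem_Fm.1 hM
    rw [inner_count hmatch]
    have hle := lc_le hmatch
    push_cast
    split_ifs with h1 h2 h2 <;> push_cast <;> omega
  push_cast
  rw [Finset.sum_congr rfl hinner, Finset.sum_add_distrib]
  have hs1 : ∑ M ∈ Fm n, (if lc M + 2 = k then ((n:ℤ) - k + 2) else 0)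
      = ((n:ℤ) - k + 2) * matchCount n ((k:ℤ) - 2) := by
    rw [← Finset.sum_filter, Finset.sum_const, nsmul_eq_mul, card_filter_lc_add n 2 k]
    push_cast
    ring
  have hs2 : ∑ M ∈ Fm n, (if lc M + 1 = k then ((n:ℤ) + k - 1) else 0)
      = ((n:ℤ) + k - 1) * matchCount n ((k:ℤ) - 1) := by
    rw [← Finset.sum_filter, Finset.sum_const, nsmul_eq_mul, card_filter_lc_add n 1 k]
    push_cast
    ring
  rw [hs1, hs2]
  ring

lemma Fk_empty {n k : ℕ} (h : n < k) : Fk n k = ∅ := by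
  rw [Finset.eq_empty_iff_forall_notMem]
  intro M hM
  rcases mem_Fk.1 hM with ⟨hmatch, hlc⟩
  have := lc_le hmatch
  omega

lemma mc_zero (n : ℕ) : matchCount n 0 = 1 := by
  induction n with
  | zero =>
    rw [show (0:ℤ) = ((0:ℕ):ℤ) by norm_num, mc_eq]
    have : Fk 0 0 = {∅} := by
      ext M
      rw [mem_Fk, Finset.mem_singleton]
      constructor
      · rintro ⟨hmatch, _⟩
        rw [Finset.eq_empty_iff_forall_notMem]
        intro p hp
        have hsub := pair_subset hmatch hp
        have hc := hmatch.1 p hp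
        have : p = ∅ := by
          rw [← Finset.subset_empty]
          simpa using hsub
        rw [this] at hc
        simp at hc
      · rintro rfl
        refine ⟨⟨by simp, by simp, by simp⟩, by simp [lc]⟩
    rw [this, Finset.card_singleton]
  | succ m ih =>
    have hm := master m 0
    rw [show ((0:ℕ):ℤ) = (0:ℤ) by norm_num] at hm
    rw [mc_neg m (by norm_num : (0:ℤ) - 1 < 0), mc_neg m (by norm_num : (0:ℤ) - 2 < 0)] at hm
    have h0 : matchCount (m+1) (0:ℤ) = (Fk (m+1) 0).card := by
      rw [show (0:ℤ) = ((0:ℕ):ℤ) by norm_num, mc_eq]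
    have h1 : matchCount m (0:ℤ) = (Fk m 0).card := by
      rw [show (0:ℤ) = ((0:ℕ):ℤ) by norm_num, mc_eq]
    rw [h1] at ih
    rw [h0]
    omega

theorem stmt14 :
    (∀ n : ℕ, 1 ≤ n → ∀ k : ℤ,
      (matchCount n k : ℤ) = matchCount (n - 1) k
        + ((n : ℤ) + k - 2) * matchCount (n - 1) (k - 1)
        + ((n : ℤ) - k + 1) * matchCount (n - 1) (k - 2)) ∧
    (∀ (n : ℕ) (k : ℤ), k < 0 ∨ (n : ℤ) < k → matchCount n k = 0) ∧
    (∀ n : ℕ, matchCount n 0 = 1) := by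
  refine ⟨?_, ?_, mc_zero⟩
  · intro n hn k
    obtain ⟨m, rfl⟩ : ∃ m, n = m + 1 := ⟨n - 1, by omega⟩
    have hm1 : m + 1 - 1 = m := by omega
    rw [hm1]
    by_cases hk : k < 0
    · rw [mc_neg (m+1) hk, mc_neg m hk, mc_neg m (by omega : k - 1 < 0),
        mc_neg m (by omega : k - 2 < 0)]
      push_cast
      ring
    · push_neg at hk
      obtain ⟨k', rfl⟩ : ∃ k' : ℕ, k = (k' : ℤ) := ⟨k.toNat, by omega⟩
      have := master m k'
      rw [mc_eq (m+1) k', mc_eq m k', this]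
      push_cast
      ring
  · intro n k hk
    rcases hk with hk | hk
    · exact mc_neg n hk
    · have hk0 : 0 ≤ k := le_trans (Nat.cast_nonneg n) hk.le
      obtain ⟨k', rfl⟩ : ∃ k' : ℕ, k = (k' : ℤ) := ⟨k.toNat, by omega⟩
      have hnk : n < k' := by exact_mod_cast hk
      rw [mc_eq, Fk_empty hnk, Finset.card_empty]
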